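/- arXiv:1812.08006 — 6 statements merged into one kernel-verified Lean document; each statement's English description precedes it below -/
import Mathlib

section
/- Let n ≥ 1 and 0 ≤ m ≤ n be integers and let p_{jk} (1 ≤ j,k ≤ n) be real numbers satisfying (H3). For each j ≤ n set x_j = 0 if 1 ≤ j ≤ m and x_j = 1 if m < j ≤ n. Let γ_j : [0,1]×ℝ → ℝ and τ_j : [0,1]×ℝ → ℝ (1 ≤ j ≤ n) be arbitrary functions. Define the operator R taking a function u : [0,1]×ℝ → ℝⁿ to Ru : ℝ → ℝⁿ by (Ru)_j(t) = Σ_{k=m+1}^n p_{jk} u_k(0,t) + Σ_{k=1}^m p_{jk} u_k(1,t), and the operator S taking a function v : ℝ → ℝⁿ to Sv : [0,1]×ℝ → ℝⁿ by (Sv)_j(x,t) = γ_j(x,t) · v_j(τ_j(x,t)). Then (SR)ⁿ u is identically zero for every u : [0,1]×ℝ → ℝⁿ. -/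
/- STATEMENT 10: assumption (H3) implies condition (H3)′, i.e. `(S ∘ R)ⁿ ≡ 0`
for the boundary operator `R` and any weighted substitution operator `S`. -/
theorem stmt_10 (n m : ℕ) (hn : 1 ≤ n) (hmn : m ≤ n)
    (p : Fin n → Fin n → ℝ)
    (hH3 : ∀ i : Fin (n + 1) → Fin n, ∏ l : Fin n, p (i l.castSucc) (i l.succ) = 0)
    (γ τ : Fin n → ℝ → ℝ → ℝ)
    (R : (ℝ → ℝ → Fin n → ℝ) → (ℝ → Fin n → ℝ))
    (S : (ℝ → Fin n → ℝ) → (ℝ → ℝ → Fin n → ℝ))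
    (hR : ∀ (u : ℝ → ℝ → Fin n → ℝ) (t : ℝ) (j : Fin n),
      R u t j = ∑ k : Fin n,
        if m ≤ (k : ℕ) then p j k * u 0 t k else p j k * u 1 t k)
    (hS : ∀ (v : ℝ → Fin n → ℝ) (x t : ℝ) (j : Fin n),
      S v x t j = γ j x t * v (τ j x t) j)
    (u : ℝ → ℝ → Fin n → ℝ) :
    ∀ (x t : ℝ) (j : Fin n), (S ∘ R)^[n] u x t j = 0 := by
  suffices h : ∀ N : ℕ, ∃ c : Fin n → (Fin N → Fin n) → ℝ → ℝ → ℝ,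
      ∀ x t (j : Fin n), (S ∘ R)^[N] u x t j
        = ∑ k : Fin N → Fin n,
            (∏ l : Fin N, p ((Fin.cons j k : Fin (N+1) → Fin n) l.castSucc) ((Fin.cons j k : Fin (N+1) → Fin n) l.succ)) * c j k x t by
    intro x t j
    obtain ⟨c, hc⟩ := h n
    rw [hc]
    exact Finset.sum_eq_zero fun k _ => by rw [hH3 (Fin.cons j k), zero_mul]
  intro N
  induction N with
  | zero =>
    exact ⟨fun j _ x t => u x t j, fun x t j => by simp⟩
  | succ N ih =>
    obtain ⟨c, hc⟩ := ih
    refine ⟨fun j K x t => γ j x t * c (K 0) (Fin.tail K)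
      (if m ≤ ((K 0 : Fin n) : ℕ) then 0 else 1) (τ j x t), fun x t j => ?_⟩
    rw [Function.iterate_succ_apply' (S ∘ R) N u]
    simp only [Function.comp_apply, hS, hR]
    rw [Finset.mul_sum]
    rw [Fintype.sum_equiv (Fin.consEquiv (fun _ => Fin n)).symm
      (fun K => (∏ l : Fin (N+1), p ((Fin.cons j K : Fin (N+2) → Fin n) l.castSucc) ((Fin.cons j K : Fin (N+2) → Fin n) l.succ)) *
        (γ j x t * c (K 0) (Fin.tail K)
          (if m ≤ ((K 0 : Fin n) : ℕ) then 0 else 1) (τ j x t)))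
      (fun q => (∏ l : Fin (N+1),
          p ((Fin.cons j (Fin.cons q.1 q.2) : Fin (N+2) → Fin n) l.castSucc) ((Fin.cons j (Fin.cons q.1 q.2) : Fin (N+2) → Fin n) l.succ)) *
        (γ j x t * c q.1 q.2 (if m ≤ (q.1 : ℕ) then 0 else 1) (τ j x t)))
      (fun K => by simp [Fin.consEquiv]; exact Or.inl (Or.inl rfl))]
    rw [Fintype.sum_prod_type]
    refine Finset.sum_congr rfl fun k _ => ?_
    have hif : (if m ≤ (k : ℕ) then p j k * (S ∘ R)^[N] u 0 (τ j x t) k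
        else p j k * (S ∘ R)^[N] u 1 (τ j x t) k)
        = p j k * (S ∘ R)^[N] u (if m ≤ (k : ℕ) then 0 else 1) (τ j x t) k := by
      split <;> rfl
    rw [hif, hc]
    rw [Finset.mul_sum, Finset.mul_sum]
    refine Finset.sum_congr rfl fun k' _ => ?_
    have hprod : (∏ l : Fin (N+1),
        p ((Fin.cons j (Fin.cons k k') : Fin (N+2) → Fin n) l.castSucc) ((Fin.cons j (Fin.cons k k') : Fin (N+2) → Fin n) l.succ))
        = p j k * ∏ l : Fin N, p ((Fin.cons k k' : Fin (N+1) → Fin n) l.castSucc) ((Fin.cons k k' : Fin (N+1) → Fin n) l.succ) := by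
      rw [Fin.prod_univ_succ]
      simp [← Fin.succ_castSucc]
    rw [hprod]
    ring
end

section
/- Let n ≥ 1 and let p be an n×n real matrix with entries p_{jk}, and let W be the n×n matrix with entries w_{jk} = |p_{jk}|. Then the trace of W + W² + ⋯ + Wⁿ equals 0 if and only if p_{i₁i₂} p_{i₂i₃} ⋯ p_{iₙ i_{n+1}} = 0 for every tuple (i₁,…,i_{n+1}) ∈ {1,…,n}^{n+1}. -/
section Aux

variable {n : ℕ} (W : Matrix (Fin n) (Fin n) ℝ)

lemma aux_pow_nonneg (hW : ∀ a b, 0 ≤ W a b) :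
    ∀ m a b, 0 ≤ (W ^ m) a b := by
  intro m
  induction m with
  | zero =>
    intro a b
    simp only [pow_zero]
    by_cases h : a = b
    · subst h; simp [Matrix.one_apply_eq]
    · simp [Matrix.one_apply_ne h]
  | succ m ih =>
    intro a b
    rw [pow_succ, Matrix.mul_apply]
    exact Finset.sum_nonneg fun c _ => mul_nonneg (ih a c) (hW c b)

lemma aux_prod_le (hW : ∀ a b, 0 ≤ W a b) :
    ∀ (m : ℕ) (f : ℕ → Fin n),
      ∏ l ∈ Finset.range m, W (f l) (f (l + 1)) ≤ (W ^ m) (f 0) (f m) := by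
  intro m
  induction m with
  | zero => intro f; simp [Matrix.one_apply_eq]
  | succ m ih =>
    intro f
    rw [pow_succ, Matrix.mul_apply, Finset.prod_range_succ]
    calc (∏ l ∈ Finset.range m, W (f l) (f (l + 1))) * W (f m) (f (m + 1))
        ≤ (W ^ m) (f 0) (f m) * W (f m) (f (m + 1)) :=
          mul_le_mul_of_nonneg_right (ih f) (hW _ _)
      _ ≤ ∑ c, (W ^ m) (f 0) c * W c (f (m + 1)) :=
          Finset.single_le_sum
            (fun c _ => mul_nonneg (aux_pow_nonneg W hW m (f 0) c) (hW c (f (m + 1))))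
            (Finset.mem_univ (f m))

lemma aux_pow_zero :
    ∀ (m : ℕ) (a b : Fin n),
      (∀ f : ℕ → Fin n, f 0 = a → f m = b →
        ∏ l ∈ Finset.range m, W (f l) (f (l + 1)) = 0) →
      (W ^ m) a b = 0 := by
  intro m
  induction m with
  | zero =>
    intro a b h
    by_cases hab : a = b
    · subst hab
      have := h (fun _ => a) rfl rfl
      simp at this
    · simp [Matrix.one_apply_ne hab]
  | succ m ih =>
    intro a b h
    rw [pow_succ, Matrix.mul_apply]
    refine Finset.sum_eq_zero fun c _ => ?_
    by_cases hcb : W c b = 0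
    · rw [hcb, mul_zero]
    · have : (W ^ m) a c = 0 := by
        apply ih
        intro f hf0 hfm
        set g : ℕ → Fin n := fun l => if l ≤ m then f l else b with hg
        have h1 : ∏ l ∈ Finset.range (m + 1), W (g l) (g (l + 1)) = 0 := by
          apply h g
          · simp [hg, hf0]
          · simp [hg]
        rw [Finset.prod_range_succ] at h1
        have h2 : ∀ l ∈ Finset.range m, W (g l) (g (l + 1)) = W (f l) (f (l + 1)) := by
          intro l hl
          rw [Finset.mem_range] at hl
          simp only [hg]
          rw [if_pos (by omega), if_pos (by omega)]
        rw [Finset.prod_congr rfl h2] at h1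
        have h3 : g m = c := by simp [hg, hfm]
        have h4 : g (m + 1) = b := by simp [hg]
        rw [h3, h4] at h1
        exact (mul_eq_zero.mp h1).resolve_right hcb
      rw [this, zero_mul]

end Aux

/- STATEMENT 11: algebraic characterization of assumption (H3):
`tr(W + W² + ⋯ + Wⁿ) = 0` where `w_{jk} = |p_{jk}|` iff every product
`p_{i₁i₂} p_{i₂i₃} ⋯ p_{iₙ i_{n+1}}` vanishes. -/
theorem stmt_11 (n : ℕ) (hn : 1 ≤ n) (p : Matrix (Fin n) (Fin n) ℝ) :
    Matrix.trace (∑ k ∈ Finset.range n, (Matrix.of fun j k => |p j k|) ^ (k + 1)) = 0 ↔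
    ∀ i : Fin (n + 1) → Fin n, ∏ l : Fin n, p (i l.castSucc) (i l.succ) = 0 := by
  set W : Matrix (Fin n) (Fin n) ℝ := Matrix.of fun j k => |p j k| with hWdef
  have hW : ∀ a b, 0 ≤ W a b := fun a b => abs_nonneg _
  constructor
  · intro htr i
    by_contra hne
    -- all factors are nonzero
    have hfac : ∀ l : Fin n, W (i l.castSucc) (i l.succ) ≠ 0 := by
      intro l hl
      apply hne
      apply Finset.prod_eq_zero (Finset.mem_univ l)
      simpa [hWdef, abs_eq_zero] using hl
    -- traces of individual powers vanish
    rw [Matrix.trace_sum] at htr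
    have htrk : ∀ k ∈ Finset.range n, Matrix.trace (W ^ (k + 1)) = 0 := by
      rw [← Finset.sum_eq_zero_iff_of_nonneg]
      · exact htr
      · intro k _
        exact Finset.sum_nonneg fun a _ => aux_pow_nonneg W hW (k + 1) a a
    have hdiag : ∀ k ∈ Finset.range n, ∀ a : Fin n, (W ^ (k + 1)) a a = 0 := by
      intro k hk a
      have := htrk k hk
      rw [Matrix.trace] at this
      have := (Finset.sum_eq_zero_iff_of_nonneg
        (fun c _ => aux_pow_nonneg W hW (k + 1) c c)).mp this
      exact this a (Finset.mem_univ a)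
    -- pigeonhole: find a repeated vertex
    obtain ⟨a, b, hab, heq⟩ := Fintype.exists_ne_map_eq_of_card_lt i (by simp)
    wlog hlt : (a : ℕ) < (b : ℕ) generalizing a b
    · refine this b a hab.symm heq.symm ?_
      have hne' : (a : ℕ) ≠ (b : ℕ) := fun hh => hab (Fin.ext hh)
      omega
    set m : ℕ := (b : ℕ) - (a : ℕ) with hm
    have hm1 : 1 ≤ m := by omega
    have hmn : m ≤ n := by omega
    -- the closed walk
    set f : ℕ → Fin n := fun l => i ⟨min ((a : ℕ) + l) n, by omega⟩ with hf
    have hpos : 0 < ∏ l ∈ Finset.range m, W (f l) (f (l + 1)) := by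
      apply Finset.prod_pos
      intro l hl
      rw [Finset.mem_range] at hl
      have hle : (a : ℕ) + l < n := by omega
      have h1 : (⟨min ((a : ℕ) + l) n, by omega⟩ : Fin (n + 1)) =
          (⟨(a : ℕ) + l, by omega⟩ : Fin n).castSucc := by
        simp [Fin.castSucc, Fin.ext_iff]; omega
      have h2 : (⟨min ((a : ℕ) + (l + 1)) n, by omega⟩ : Fin (n + 1)) =
          (⟨(a : ℕ) + l, by omega⟩ : Fin n).succ := by
        simp [Fin.ext_iff]; omega
      have := hfac ⟨(a : ℕ) + l, hle⟩
      have hnn := hW (i (⟨(a : ℕ) + l, hle⟩ : Fin n).castSucc)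
        (i (⟨(a : ℕ) + l, hle⟩ : Fin n).succ)
      simp only [hf, h1, h2]
      exact lt_of_le_of_ne hnn (Ne.symm this)
    have hle := aux_prod_le W hW m f
    have hf0 : f 0 = i a := by
      simp only [hf]
      congr 1
      simp [Fin.ext_iff]; omega
    have hfm : f m = i a := by
      simp only [hf]
      rw [heq]
      congr 1
      simp [Fin.ext_iff]; omega
    rw [hf0, hfm] at hle
    have hdz : (W ^ m) (i a) (i a) = 0 := by
      have := hdiag (m - 1) (by rw [Finset.mem_range]; omega) (i a)
      rwa [Nat.sub_add_cancel hm1] at this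
    rw [hdz] at hle
    exact absurd (lt_of_lt_of_le hpos hle) (lt_irrefl 0)
  · intro h
    -- first: W ^ n = 0
    have hWn : W ^ n = 0 := by
      ext a b
      rw [Matrix.zero_apply]
      apply aux_pow_zero
      intro f _ _
      have key := h (fun j => f (j : ℕ))
      have : ∏ l : Fin n, p (f ((l : Fin n).castSucc : ℕ)) (f ((l : Fin n).succ : ℕ)) = 0 :=
        key
      have habs : ∏ l : Fin n, W (f (l : ℕ)) (f ((l : ℕ) + 1)) = 0 := by
        have := congrArg abs this
        rw [Finset.abs_prod, abs_zero] at this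
        simpa [hWdef, Fin.coe_castSucc, Fin.val_succ] using this
      rw [← habs] at *
      exact Finset.prod_range fun l => W (f l) (f (l + 1))
    have hnil : IsNilpotent W := ⟨n, hWn⟩
    rw [Matrix.trace_sum]
    apply Finset.sum_eq_zero
    intro k _
    have : IsNilpotent (W ^ (k + 1)) := hnil.pow_succ k
    have := Matrix.isNilpotent_trace_of_isNilpotent this
    exact this.eq_zero
end

section
/- Let Λ₀ > 0, let a : [0,1]×ℝ → ℝ be continuously differentiable with ‖a‖_{BC¹} := sup_{[0,1]×ℝ}(|a| + |∂_x a| + |∂_t a|) < ∞ and |a(x,t)| ≥ Λ₀ for all (x,t), and let ã : [0,1]×ℝ → ℝ be continuous and bounded with |a(x,t) + ã(x,t)| ≥ Λ₀ for all (x,t); set ‖ã‖ := sup |ã|. Fix x ∈ [0,1] and t ∈ ℝ, and let ω, ω̃ : [0,1] → ℝ be differentiable functions satisfying ω′(ξ) = 1/a(ξ, ω(ξ)) and ω̃′(ξ) = 1/(a(ξ, ω̃(ξ)) + ã(ξ, ω̃(ξ))) for all ξ ∈ [0,1], with ω(x) = ω̃(x) = t. Then for every η ∈ [0,1], |ω(η)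 − ω̃(η)| ≤ (1/Λ₀²) ‖ã‖ exp(|η − x| ‖a‖_{BC¹} / Λ₀²). -/
open Set Real

lemma gron_aux (f f' : ℝ → ℝ) (K ε : ℝ) (x η : ℝ)
    (hx : x ∈ Set.Icc (0:ℝ) 1) (hη : η ∈ Set.Icc (0:ℝ) 1)
    (hf : ∀ ξ ∈ Set.Icc (0:ℝ) 1, HasDerivWithinAt f (f' ξ) (Set.Icc 0 1) ξ)
    (hb : ∀ ξ ∈ Set.Icc (0:ℝ) 1, |f' ξ| ≤ K * |f ξ| + ε)
    (hfx : f x = 0) :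
    |f η| ≤ gronwallBound 0 K ε |η - x| := by
  rcases le_total x η with hle | hle
  · have key := norm_le_gronwallBound_of_norm_deriv_right_le (f := f) (f' := f')
      (δ := 0) (K := K) (ε := ε) (a := x) (b := η)
      (fun ξ hξ => ((hf ξ ⟨hx.1.trans hξ.1, hξ.2.trans hη.2⟩).continuousWithinAt).mono
        (Icc_subset_Icc hx.1 hη.2))
      (fun s hs => ((hf s ⟨hx.1.trans hs.1, hs.2.le.trans hη.2⟩).mono
        (Icc_subset_Icc (hx.1.trans hs.1) hη.2)).mono_of_mem_nhdsWithin
        (Icc_mem_nhdsGE_of_mem ⟨le_rfl, hs.2⟩))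
      (by simp [hfx])
      (fun s hs => by
        simpa [Real.norm_eq_abs] using hb s ⟨hx.1.trans hs.1, hs.2.le.trans hη.2⟩)
      η ⟨hle, le_rfl⟩
    rw [abs_of_nonneg (show (0:ℝ) ≤ η - x by linarith)]
    simpa using key
  · set c : ℝ → ℝ := fun s => x + η - s with hc
    have hcmem : ∀ s ∈ Icc η x, c s ∈ Icc (0:ℝ) 1 := fun s hs =>
      ⟨by simp only [hc]; linarith [hη.1, hs.2], by simp only [hc]; linarith [hx.2, hs.1]⟩
    have hcd : ∀ s : ℝ, HasDerivAt c (-1) s := fun s => by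
      simpa using (hasDerivAt_id s).const_sub (x + η)
    have key := norm_le_gronwallBound_of_norm_deriv_right_le
      (f := fun s => f (c s)) (f' := fun s => f' (c s) * (-1))
      (δ := 0) (K := K) (ε := ε) (a := η) (b := x)
      (fun s hs => ((hf (c s) (hcmem s hs)).continuousWithinAt).comp
        ((hcd s).continuousAt.continuousWithinAt) (fun s' hs' => hcmem s' hs'))
      (fun s hs => by
        have hmaps : MapsTo c (Icc s x) (Icc (0:ℝ) 1) := fun s' hs' =>
          hcmem s' ⟨hs.1.trans hs'.1, hs'.2⟩
        have hcomp := HasDerivWithinAt.comp s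
          (hf (c s) (hcmem s ⟨hs.1, hs.2.le⟩))
          ((hcd s).hasDerivWithinAt (s := Icc s x)) hmaps
        exact hcomp.mono_of_mem_nhdsWithin (Icc_mem_nhdsGE_of_mem ⟨le_rfl, hs.2⟩))
      (by simp [hc, hfx])
      (fun s hs => by
        simpa [Real.norm_eq_abs, abs_mul] using hb (c s) (hcmem s ⟨hs.1, hs.2.le⟩))
      x ⟨hle, le_rfl⟩
    rw [Real.norm_eq_abs] at key
    simp only [hc] at key
    rw [show x + η - x = η by ring] at key
    rwa [abs_of_nonpos (show η - x ≤ 0 by linarith), neg_sub]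

/- STATEMENT 12: Gronwall-type estimate for the distance between the
characteristic curves of the unperturbed and perturbed hyperbolic equations. -/
theorem stmt_12 (Λ₀ : ℝ) (hΛ₀ : 0 < Λ₀)
    (a ax aT atil : ℝ → ℝ → ℝ) (Ca Cat : ℝ)
    -- `a` is continuously differentiable on `[0,1] × ℝ` with partial derivatives `ax`, `aT`
    (ha_diff : ∀ x ∈ Set.Icc (0:ℝ) 1, ∀ t : ℝ,
      HasDerivWithinAt (fun y => a y t) (ax x t) (Set.Icc 0 1) x ∧
      HasDerivAt (fun τ => a x τ) (aT x t) t)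
    (ha_cont : ContinuousOn (fun q : ℝ × ℝ => a q.1 q.2) (Set.Icc 0 1 ×ˢ Set.univ))
    (hax_cont : ContinuousOn (fun q : ℝ × ℝ => ax q.1 q.2) (Set.Icc 0 1 ×ˢ Set.univ))
    (haT_cont : ContinuousOn (fun q : ℝ × ℝ => aT q.1 q.2) (Set.Icc 0 1 ×ˢ Set.univ))
    -- `Ca` bounds the `BC¹` norm `sup (|a| + |∂ₓa| + |∂ₜa|)` of `a`
    (hCa : ∀ x ∈ Set.Icc (0:ℝ) 1, ∀ t : ℝ, |a x t| + |ax x t| + |aT x t| ≤ Ca)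
    (ha_low : ∀ x ∈ Set.Icc (0:ℝ) 1, ∀ t : ℝ, Λ₀ ≤ |a x t|)
    -- the perturbation `atil` is continuous and bounded by `Cat`
    (hatil_cont : ContinuousOn (fun q : ℝ × ℝ => atil q.1 q.2) (Set.Icc 0 1 ×ˢ Set.univ))
    (hCat : ∀ x ∈ Set.Icc (0:ℝ) 1, ∀ t : ℝ, |atil x t| ≤ Cat)
    (hpert_low : ∀ x ∈ Set.Icc (0:ℝ) 1, ∀ t : ℝ, Λ₀ ≤ |a x t + atil x t|)
    (x t : ℝ) (hx : x ∈ Set.Icc (0:ℝ) 1)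
    (ω ωtil : ℝ → ℝ)
    (hω : ∀ ξ ∈ Set.Icc (0:ℝ) 1,
      HasDerivWithinAt ω (1 / a ξ (ω ξ)) (Set.Icc 0 1) ξ)
    (hωtil : ∀ ξ ∈ Set.Icc (0:ℝ) 1,
      HasDerivWithinAt ωtil (1 / (a ξ (ωtil ξ) + atil ξ (ωtil ξ))) (Set.Icc 0 1) ξ)
    (hωx : ω x = t) (hωtilx : ωtil x = t) :
    ∀ η ∈ Set.Icc (0:ℝ) 1,
      |ω η - ωtil η| ≤ (1 / Λ₀ ^ 2) * Cat * Real.exp (|η - x| * Ca / Λ₀ ^ 2) := by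
  intro η hη
  have hΛ2 : (0:ℝ) < Λ₀ ^ 2 := by positivity
  have hCaΛ : Λ₀ ≤ Ca := by
    have h1 := hCa x hx t
    have h2 := ha_low x hx t
    have := abs_nonneg (ax x t)
    have := abs_nonneg (aT x t)
    linarith
  have hCaPos : 0 < Ca := lt_of_lt_of_le hΛ₀ hCaΛ
  have hCat0 : 0 ≤ Cat := le_trans (abs_nonneg _) (hCat x hx t)
  set K : ℝ := Ca / Λ₀ ^ 2 with hK
  set ε : ℝ := Cat / Λ₀ ^ 2 with hε
  have hKpos : 0 < K := by positivity
  set f : ℝ → ℝ := fun ξ => ω ξ - ωtil ξ with hfdef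
  set f' : ℝ → ℝ := fun ξ => 1 / a ξ (ω ξ) - 1 / (a ξ (ωtil ξ) + atil ξ (ωtil ξ)) with hf'def
  have hf : ∀ ξ ∈ Set.Icc (0:ℝ) 1, HasDerivWithinAt f (f' ξ) (Set.Icc 0 1) ξ :=
    fun ξ hξ => (hω ξ hξ).sub (hωtil ξ hξ)
  -- Lipschitz in the second variable
  have hLip : ∀ ξ ∈ Set.Icc (0:ℝ) 1, ∀ u v : ℝ, |a ξ u - a ξ v| ≤ Ca * |u - v| := by
    intro ξ hξ u v
    have := Convex.norm_image_sub_le_of_norm_hasDerivWithin_le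
      (f := fun τ => a ξ τ) (f' := fun τ => aT ξ τ) (s := Set.univ) (C := Ca)
      (fun τ _ => (ha_diff ξ hξ τ).2.hasDerivWithinAt)
      (fun τ _ => by
        have h1 := hCa ξ hξ τ
        have := abs_nonneg (a ξ τ)
        have := abs_nonneg (ax ξ τ)
        rw [Real.norm_eq_abs]; linarith)
      convex_univ (Set.mem_univ v) (Set.mem_univ u)
    simpa [Real.norm_eq_abs] using this
  have hb : ∀ ξ ∈ Set.Icc (0:ℝ) 1, |f' ξ| ≤ K * |f ξ| + ε := by
    intro ξ hξ
    set p := a ξ (ω ξ) with hp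
    set q := a ξ (ωtil ξ) + atil ξ (ωtil ξ) with hq
    have hpl : Λ₀ ≤ |p| := ha_low ξ hξ _
    have hql : Λ₀ ≤ |q| := hpert_low ξ hξ _
    have hp0 : p ≠ 0 := by
      intro h; rw [h] at hpl; simp at hpl; linarith
    have hq0 : q ≠ 0 := by
      intro h; rw [h] at hql; simp at hql; linarith
    have heq : f' ξ = (q - p) / (p * q) := by
      simp only [hf'def, ← hp, ← hq]
      rw [div_sub_div _ _ hp0 hq0]; ring
    have hnum : |q - p| ≤ Ca * |f ξ| + Cat := by
      have h1 : q - p = (a ξ (ωtil ξ) - a ξ (ω ξ)) + atil ξ (ωtil ξ) := by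
        simp only [hp, hq]; ring
      calc |q - p| ≤ |a ξ (ωtil ξ) - a ξ (ω ξ)| + |atil ξ (ωtil ξ)| := by
            rw [h1]; exact abs_add_le _ _
        _ ≤ Ca * |ωtil ξ - ω ξ| + Cat :=
            add_le_add (hLip ξ hξ _ _) (hCat ξ hξ _)
        _ = Ca * |f ξ| + Cat := by rw [abs_sub_comm]
    have hden : Λ₀ ^ 2 ≤ |p * q| := by
      rw [abs_mul, sq]
      exact mul_le_mul hpl hql hΛ₀.le (le_trans hΛ₀.le hpl)
    have hnumnn : (0:ℝ) ≤ Ca * |f ξ| + Cat := by positivity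
    rw [heq, abs_div]
    calc |q - p| / |p * q| ≤ (Ca * |f ξ| + Cat) / Λ₀ ^ 2 :=
          div_le_div₀ hnumnn hnum hΛ2 hden
      _ = K * |f ξ| + ε := by rw [hK, hε]; ring
  have hfx0 : f x = 0 := by simp only [hfdef]; rw [hωx, hωtilx]; ring
  have key := gron_aux f f' K ε x η hx hη hf hb hfx0
  set s := |η - x| with hs
  have hs0 : 0 ≤ s := abs_nonneg _
  have hs1 : s ≤ 1 := by
    rw [hs, abs_le]
    constructor <;> [linarith [hη.1, hx.2]; linarith [hη.2, hx.1]]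
  rw [gronwallBound_of_K_ne_0 hKpos.ne'] at key
  simp only [zero_mul, zero_add] at key
  have hexp : ε / K * (Real.exp (K * s) - 1) ≤ (1 / Λ₀ ^ 2) * Cat * Real.exp (s * Ca / Λ₀ ^ 2) := by
    have hE : Real.exp (K * s) - 1 ≤ K * s * Real.exp (K * s) := by
      have h1 := Real.add_one_le_exp (-(K * s))
      have h2 := Real.exp_pos (K * s)
      have h3 : Real.exp (-(K * s)) = (Real.exp (K * s))⁻¹ := Real.exp_neg _
      rw [h3] at h1
      have h4 : (1 - K * s) * Real.exp (K * s) ≤ 1 := by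
        calc (1 - K * s) * Real.exp (K * s) = (-(K * s) + 1) * Real.exp (K * s) := by ring
          _ ≤ (Real.exp (K * s))⁻¹ * Real.exp (K * s) :=
              mul_le_mul_of_nonneg_right h1 h2.le
          _ = 1 := inv_mul_cancel₀ h2.ne'
      nlinarith
    have harg : K * s = s * Ca / Λ₀ ^ 2 := by rw [hK]; ring
    have hεK : ε / K = (1 / Λ₀ ^ 2) * Cat / K := by rw [hε]; ring
    calc ε / K * (Real.exp (K * s) - 1) ≤ ε / K * (K * s * Real.exp (K * s)) := by
          apply mul_le_mul_of_nonneg_left hE; positivity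
      _ = (1 / Λ₀ ^ 2) * Cat * (s * Real.exp (K * s)) := by
          field_simp [hε]; rw [hε]; field_simp
      _ ≤ (1 / Λ₀ ^ 2) * Cat * (1 * Real.exp (K * s)) := by
          apply mul_le_mul_of_nonneg_left _ (by positivity)
          exact mul_le_mul_of_nonneg_right hs1 (Real.exp_pos _).le
      _ = (1 / Λ₀ ^ 2) * Cat * Real.exp (s * Ca / Λ₀ ^ 2) := by rw [harg]; ring
  calc |ω η - ωtil η| = |f η| := rfl
    _ ≤ ε / K * (Real.exp (K * s) - 1) := key
    _ ≤ (1 / Λ₀ ^ 2) * Cat * Real.exp (s * Ca / Λ₀ ^ 2) := hexp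
end

section
/- Let Λ₀ > 0 and let a : [0,1]×ℝ → ℝ be continuously differentiable with bounded continuous partial derivatives and |a(x,t)| ≥ Λ₀ for all (x,t). For (ξ,x,t) ∈ [0,1]×[0,1]×ℝ let ω(ξ,x,t) be the unique solution of the characteristic equation ∂_ξ ω(ξ,x,t) = 1/a(ξ, ω(ξ,x,t)) with ω(x,x,t) = t. Then for each fixed ξ, x the map t ↦ ω(ξ,x,t) is differentiable with ∂_t ω(ξ,x,t) = exp ∫_ξ^x (∂_t a)(η, ω(η,x,t)) / a(η, ω(η,x,t))² dη, and for each fixed ξ, t the map x ↦ ω(ξ,x,t) is differentiable with ∂_x ω(ξ,x,t) = −(1/a(x,t)) · exp ∫_ξ^x (∂_t a)(η, ω(η,x,t)) / a(η, ω(η,x,t))² dη. -/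
open Set MeasureTheory Filter Topology

namespace Stmt13

/-- clamp to `[0,1]` -/
noncomputable def pr (η : ℝ) : ℝ := max 0 (min 1 η)

lemma pr_mem (η : ℝ) : pr η ∈ Icc (0:ℝ) 1 :=
  ⟨le_max_left _ _, max_le zero_le_one (min_le_left _ _)⟩

lemma pr_eq {η : ℝ} (hη : η ∈ Icc (0:ℝ) 1) : pr η = η := by
  simp [pr, min_eq_right hη.2, max_eq_right hη.1]

lemma pr_cont : Continuous pr :=
  continuous_const.max (continuous_const.min continuous_id)

/-- slice-composition continuity helper -/
lemma cont_comp {X : Type*} [TopologicalSpace X] {G : ℝ → ℝ → ℝ}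
    (hG : ContinuousOn (fun q : ℝ × ℝ => G q.1 q.2) (Icc 0 1 ×ˢ univ))
    {p v : X → ℝ} (hp : Continuous p) (hpm : ∀ η, p η ∈ Icc (0:ℝ) 1)
    (hv : Continuous v) : Continuous fun η => G (p η) (v η) :=
  hG.comp_continuous (hp.prodMk hv) fun η => ⟨hpm η, mem_univ _⟩

/-- a variant where `p` and `v` are only continuous on a set -/
lemma contOn_comp {G : ℝ → ℝ → ℝ}
    (hG : ContinuousOn (fun q : ℝ × ℝ => G q.1 q.2) (Icc 0 1 ×ˢ univ))
    {s : Set ℝ} {p v : ℝ → ℝ} (hp : ContinuousOn p s) (hpm : ∀ η ∈ s, p η ∈ Icc (0:ℝ) 1)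
    (hv : ContinuousOn v s) : ContinuousOn (fun η => G (p η) (v η)) s :=
  hG.comp (hp.prodMk hv) fun η hη => ⟨hpm η hη, mem_univ _⟩


variable {Λ₀ Ca : ℝ} {a aT : ℝ → ℝ → ℝ}

noncomputable def Fa (a aT : ℝ → ℝ → ℝ) (x t : ℝ) : ℝ := -aT x t / a x t ^ 2

lemma a_ne (hΛ₀ : 0 < Λ₀) (ha_low : ∀ x ∈ Set.Icc (0:ℝ) 1, ∀ t : ℝ, Λ₀ ≤ |a x t|)
    {x : ℝ} (hx : x ∈ Icc (0:ℝ) 1) (t : ℝ) : a x t ≠ 0 := by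
  intro h
  have := ha_low x hx t
  rw [h, abs_zero] at this
  linarith

lemma Fa_deriv (hΛ₀ : 0 < Λ₀) (ha_low : ∀ x ∈ Set.Icc (0:ℝ) 1, ∀ t : ℝ, Λ₀ ≤ |a x t|)
    (ha_diff : ∀ x ∈ Set.Icc (0:ℝ) 1, ∀ t : ℝ, HasDerivAt (fun τ => a x τ) (aT x t) t)
    {x : ℝ} (hx : x ∈ Icc (0:ℝ) 1) (t : ℝ) :
    HasDerivAt (fun τ => (a x τ)⁻¹) (Fa a aT x t) t := by
  simpa [Fa, neg_div, Pi.inv_def] using (ha_diff x hx t).inv (a_ne hΛ₀ ha_low hx t)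

lemma Fa_bound (hΛ₀ : 0 < Λ₀) (ha_low : ∀ x ∈ Set.Icc (0:ℝ) 1, ∀ t : ℝ, Λ₀ ≤ |a x t|)
    {ax : ℝ → ℝ → ℝ}
    (hbdd : ∀ x ∈ Set.Icc (0:ℝ) 1, ∀ t : ℝ, |a x t| + |ax x t| + |aT x t| ≤ Ca)
    {x : ℝ} (hx : x ∈ Icc (0:ℝ) 1) (t : ℝ) : |Fa a aT x t| ≤ Ca / Λ₀ ^ 2 := by
  have h1 : |aT x t| ≤ Ca := by
    have := hbdd x hx t
    have h2 := abs_nonneg (a x t); have h3 := abs_nonneg (ax x t); linarith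
  have h4 : Λ₀ ^ 2 ≤ a x t ^ 2 := by
    have := ha_low x hx t
    calc Λ₀ ^ 2 ≤ |a x t| ^ 2 := pow_le_pow_left₀ hΛ₀.le this 2
    _ = a x t ^ 2 := sq_abs _
  have h5 : (0:ℝ) < Λ₀ ^ 2 := by positivity
  have h6 : |Fa a aT x t| = |aT x t| / a x t ^ 2 := by
    rw [Fa, abs_div, abs_neg, abs_of_nonneg (by positivity : (0:ℝ) ≤ a x t ^ 2)]
  rw [h6]
  exact div_le_div₀ (le_trans (abs_nonneg _) h1) h1 h5 h4

lemma Fa_cont (hΛ₀ : 0 < Λ₀) (ha_low : ∀ x ∈ Set.Icc (0:ℝ) 1, ∀ t : ℝ, Λ₀ ≤ |a x t|)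
    (ha_cont : ContinuousOn (fun q : ℝ × ℝ => a q.1 q.2) (Set.Icc 0 1 ×ˢ Set.univ))
    (haT_cont : ContinuousOn (fun q : ℝ × ℝ => aT q.1 q.2) (Set.Icc 0 1 ×ˢ Set.univ)) :
    ContinuousOn (fun q : ℝ × ℝ => Fa a aT q.1 q.2) (Set.Icc 0 1 ×ˢ Set.univ) := by
  apply ContinuousOn.div haT_cont.neg (ha_cont.pow 2)
  intro q hq
  exact pow_ne_zero 2 (a_ne hΛ₀ ha_low hq.1 q.2)


/-- the averaged coefficient of the linear ODE satisfied by the difference of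
two characteristics -/
noncomputable def cfun (a aT : ℝ → ℝ → ℝ) (f g : ℝ → ℝ) (η : ℝ) : ℝ :=
  ∫ σ in (0:ℝ)..1, Fa a aT (pr η) (g (pr η) + (f (pr η) - g (pr η)) * σ)

variable {Λ₀ Ca : ℝ} {a aT : ℝ → ℝ → ℝ} {f g : ℝ → ℝ}

lemma cfun_cont
    (hF_cont : ContinuousOn (fun q : ℝ × ℝ => Fa a aT q.1 q.2) (Set.Icc 0 1 ×ˢ Set.univ))
    (hf : ContinuousOn f (Icc 0 1)) (hg : ContinuousOn g (Icc 0 1)) :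
    Continuous (cfun a aT f g) := by
  have hfp : Continuous (fun η : ℝ => f (pr η)) := hf.comp_continuous pr_cont pr_mem
  have hgp : Continuous (fun η : ℝ => g (pr η)) := hg.comp_continuous pr_cont pr_mem
  apply intervalIntegral.continuous_parametric_intervalIntegral_of_continuous
    (f := fun (η : ℝ) (σ : ℝ) => Fa a aT (pr η) (g (pr η) + (f (pr η) - g (pr η)) * σ))
  · exact cont_comp hF_cont (pr_cont.comp continuous_fst) (fun q => pr_mem _)
      (((hgp.comp continuous_fst)).add (((hfp.comp continuous_fst).sub
        (hgp.comp continuous_fst)).mul continuous_snd))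
  · exact continuous_const

lemma cfun_bound (hK : ∀ x ∈ Icc (0:ℝ) 1, ∀ t : ℝ, |Fa a aT x t| ≤ Ca / Λ₀ ^ 2)
    (hK0 : 0 ≤ Ca / Λ₀ ^ 2) (η : ℝ) : |cfun a aT f g η| ≤ Ca / Λ₀ ^ 2 := by
  have := intervalIntegral.norm_integral_le_of_norm_le_const
    (C := Ca / Λ₀ ^ 2) (a := (0:ℝ)) (b := 1)
    (f := fun σ => Fa a aT (pr η) (g (pr η) + (f (pr η) - g (pr η)) * σ))
    (fun σ _ => hK _ (pr_mem η) _)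
  simpa [cfun] using this

lemma cfun_eq (hΛ₀ : 0 < Λ₀) (ha_low : ∀ x ∈ Set.Icc (0:ℝ) 1, ∀ t : ℝ, Λ₀ ≤ |a x t|)
    (ha_cont : ContinuousOn (fun q : ℝ × ℝ => a q.1 q.2) (Set.Icc 0 1 ×ˢ Set.univ))
    (haT_cont : ContinuousOn (fun q : ℝ × ℝ => aT q.1 q.2) (Set.Icc 0 1 ×ˢ Set.univ))
    (ha_diff : ∀ x ∈ Set.Icc (0:ℝ) 1, ∀ t : ℝ, HasDerivAt (fun τ => a x τ) (aT x t) t)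
    {η : ℝ} (hη : η ∈ Icc (0:ℝ) 1) :
    (a η (f η))⁻¹ - (a η (g η))⁻¹ = cfun a aT f g η * (f η - g η) := by
  have hane : ∀ x ∈ Set.Icc (0:ℝ) 1, ∀ t : ℝ, a x t ≠ 0 := by
    intro x hx t h
    have := ha_low x hx t
    rw [h, abs_zero] at this; linarith
  have hFc : ContinuousOn (fun q : ℝ × ℝ => Fa a aT q.1 q.2) (Set.Icc 0 1 ×ˢ Set.univ) := by
    apply ContinuousOn.div haT_cont.neg (ha_cont.pow 2)
    exact fun q hq => pow_ne_zero 2 (hane q.1 hq.1 q.2)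
  have hFcont : Continuous (fun τ => Fa a aT η τ) :=
    cont_comp hFc continuous_const (fun _ => hη) continuous_id
  have hFd : ∀ t : ℝ, HasDerivAt (fun τ => (a η τ)⁻¹) (Fa a aT η t) t := by
    intro t
    simpa [Fa, neg_div, Pi.inv_def] using (ha_diff η hη t).inv (hane η hη t)
  have hftc : ∫ τ in g η..f η, Fa a aT η τ = (a η (f η))⁻¹ - (a η (g η))⁻¹ :=
    intervalIntegral.integral_eq_sub_of_hasDerivAt
      (fun τ _ => hFd τ) (hFcont.intervalIntegrable _ _)
  rw [cfun, pr_eq hη]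
  rcases eq_or_ne (f η - g η) 0 with hz | hz
  · have hfg : f η = g η := by rw [sub_eq_zero] at hz; exact hz
    rw [hz, mul_zero, hfg, sub_self]
  · rw [intervalIntegral.integral_comp_add_mul (fun τ => Fa a aT η τ) hz (g η),
      show g η + (f η - g η) * 1 = f η by ring, show g η + (f η - g η) * 0 = g η by ring,
      hftc, smul_eq_mul]
    field_simp



lemma key (hΛ₀ : 0 < Λ₀)
    (ha_cont : ContinuousOn (fun q : ℝ × ℝ => a q.1 q.2) (Set.Icc 0 1 ×ˢ Set.univ))
    (haT_cont : ContinuousOn (fun q : ℝ × ℝ => aT q.1 q.2) (Set.Icc 0 1 ×ˢ Set.univ))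
    (ha_low : ∀ x ∈ Set.Icc (0:ℝ) 1, ∀ t : ℝ, Λ₀ ≤ |a x t|)
    (ha_diff : ∀ x ∈ Set.Icc (0:ℝ) 1, ∀ t : ℝ, HasDerivAt (fun τ => a x τ) (aT x t) t)
    (hf : ∀ ξ ∈ Set.Icc (0:ℝ) 1, HasDerivWithinAt f (1 / a ξ (f ξ)) (Set.Icc 0 1) ξ)
    (hg : ∀ ξ ∈ Set.Icc (0:ℝ) 1, HasDerivWithinAt g (1 / a ξ (g ξ)) (Set.Icc 0 1) ξ)
    {x : ℝ} (hx : x ∈ Icc (0:ℝ) 1) {ξ : ℝ} (hξ : ξ ∈ Icc (0:ℝ) 1) :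
    f ξ - g ξ = (f x - g x) * Real.exp (∫ η in x..ξ, cfun a aT f g η) := by
  have hane : ∀ x ∈ Set.Icc (0:ℝ) 1, ∀ t : ℝ, a x t ≠ 0 := by
    intro x hx t h
    have := ha_low x hx t
    rw [h, abs_zero] at this; linarith
  have hFc : ContinuousOn (fun q : ℝ × ℝ => Fa a aT q.1 q.2) (Set.Icc 0 1 ×ˢ Set.univ) := by
    apply ContinuousOn.div haT_cont.neg (ha_cont.pow 2)
    exact fun q hq => pow_ne_zero 2 (hane q.1 hq.1 q.2)
  have hfc : ContinuousOn f (Icc 0 1) := fun ζ hζ => (hf ζ hζ).continuousWithinAt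
  have hgc : ContinuousOn g (Icc 0 1) := fun ζ hζ => (hg ζ hζ).continuousWithinAt
  set c := cfun a aT f g with hcdef
  have hc : Continuous c := cfun_cont hFc hfc hgc
  set I : ℝ → ℝ := fun ζ => ∫ η in x..ζ, c η with hIdef
  have hI : ∀ ζ : ℝ, HasDerivAt I (c ζ) ζ := fun ζ =>
    (hc.integral_hasStrictDerivAt x ζ).hasDerivAt
  set w : ℝ → ℝ := fun ζ => (f ζ - g ζ) * Real.exp (-I ζ) with hwdef
  have hw : ∀ ζ ∈ Icc (0:ℝ) 1, HasDerivWithinAt w 0 (Icc 0 1) ζ := by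
    intro ζ hζ
    have hz : HasDerivWithinAt (fun ζ => f ζ - g ζ)
        ((a ζ (f ζ))⁻¹ - (a ζ (g ζ))⁻¹) (Icc 0 1) ζ := by
      simpa [one_div, Pi.sub_def] using (hf ζ hζ).sub (hg ζ hζ)
    have hE : HasDerivWithinAt (fun ζ => Real.exp (-I ζ))
        (Real.exp (-I ζ) * -c ζ) (Icc 0 1) ζ := ((hI ζ).hasDerivWithinAt.neg).exp
    have hmul : HasDerivWithinAt (fun ζ => (f ζ - g ζ) * Real.exp (-I ζ)) _ (Icc 0 1) ζ :=
      hz.mul hE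
    convert hmul using 1
    rw [cfun_eq hΛ₀ ha_low ha_cont haT_cont ha_diff hζ]
    ring
  have hwconst : ∀ ζ ∈ Icc (0:ℝ) 1, w ζ = w 0 :=
    constant_of_derivWithin_zero (fun ζ hζ => (hw ζ hζ).differentiableWithinAt)
      (fun ζ hζ => (hw ζ (Ico_subset_Icc_self hζ)).derivWithin
        (uniqueDiffOn_Icc zero_lt_one ζ (Ico_subset_Icc_self hζ)))
  have weq : w ξ = w x := (hwconst ξ hξ).trans (hwconst x hx).symm
  have hIx : I x = 0 := intervalIntegral.integral_same
  have hwx : w x = f x - g x := by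
    rw [hwdef]; simp [hIx]
  calc f ξ - g ξ = (f ξ - g ξ) * (Real.exp (-I ξ) * Real.exp (I ξ)) := by
        rw [← Real.exp_add, neg_add_cancel, Real.exp_zero, mul_one]
    _ = w ξ * Real.exp (I ξ) := by rw [hwdef]; ring
    _ = (f x - g x) * Real.exp (I ξ) := by rw [weq, hwx]

lemma key_bound (hΛ₀ : 0 < Λ₀) (hCa : 0 ≤ Ca)
    (ha_cont : ContinuousOn (fun q : ℝ × ℝ => a q.1 q.2) (Set.Icc 0 1 ×ˢ Set.univ))
    (haT_cont : ContinuousOn (fun q : ℝ × ℝ => aT q.1 q.2) (Set.Icc 0 1 ×ˢ Set.univ))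
    (ha_low : ∀ x ∈ Set.Icc (0:ℝ) 1, ∀ t : ℝ, Λ₀ ≤ |a x t|)
    (ha_diff : ∀ x ∈ Set.Icc (0:ℝ) 1, ∀ t : ℝ, HasDerivAt (fun τ => a x τ) (aT x t) t)
    (hK : ∀ x ∈ Icc (0:ℝ) 1, ∀ t : ℝ, |Fa a aT x t| ≤ Ca / Λ₀ ^ 2)
    (hf : ∀ ξ ∈ Set.Icc (0:ℝ) 1, HasDerivWithinAt f (1 / a ξ (f ξ)) (Set.Icc 0 1) ξ)
    (hg : ∀ ξ ∈ Set.Icc (0:ℝ) 1, HasDerivWithinAt g (1 / a ξ (g ξ)) (Set.Icc 0 1) ξ)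
    {x : ℝ} (hx : x ∈ Icc (0:ℝ) 1) {ξ : ℝ} (hξ : ξ ∈ Icc (0:ℝ) 1) :
    |f ξ - g ξ| ≤ |f x - g x| * Real.exp (Ca / Λ₀ ^ 2) := by
  have hK0 : (0:ℝ) ≤ Ca / Λ₀ ^ 2 := div_nonneg hCa (by positivity)
  rw [key hΛ₀ ha_cont haT_cont ha_low ha_diff hf hg hx hξ, abs_mul, Real.abs_exp]
  have h1 : |∫ η in x..ξ, cfun a aT f g η| ≤ (Ca / Λ₀ ^ 2) * |ξ - x| :=
    by
      have := intervalIntegral.norm_integral_le_of_norm_le_const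
        (a := x) (b := ξ) (C := Ca / Λ₀ ^ 2) (f := cfun a aT f g)
        (fun η _ => by simpa [Real.norm_eq_abs] using cfun_bound hK hK0 η)
      simpa [Real.norm_eq_abs] using this
  have h2 : |ξ - x| ≤ 1 := by
    rw [abs_sub_le_iff]
    constructor <;> linarith [hx.1, hx.2, hξ.1, hξ.2]
  have h3 : (∫ η in x..ξ, cfun a aT f g η) ≤ Ca / Λ₀ ^ 2 := by
    calc (∫ η in x..ξ, cfun a aT f g η) ≤ |∫ η in x..ξ, cfun a aT f g η| := le_abs_self _
      _ ≤ (Ca / Λ₀ ^ 2) * |ξ - x| := h1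
      _ ≤ (Ca / Λ₀ ^ 2) * 1 := by gcongr
      _ = Ca / Λ₀ ^ 2 := mul_one _
  exact mul_le_mul_of_nonneg_left (Real.exp_le_exp.2 h3) (abs_nonneg _)

lemma tendsto_cfun {ι : Type*} {l : Filter ι} [l.IsCountablyGenerated]
    (hΛ₀ : 0 < Λ₀) (hCa : 0 ≤ Ca)
    (hFc : ContinuousOn (fun q : ℝ × ℝ => Fa a aT q.1 q.2) (Set.Icc 0 1 ×ˢ Set.univ))
    (hK : ∀ x ∈ Icc (0:ℝ) 1, ∀ t : ℝ, |Fa a aT x t| ≤ Ca / Λ₀ ^ 2)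
    (hgc : ContinuousOn g (Icc 0 1))
    {fs : ι → ℝ → ℝ}
    (hmeas : ∀ᶠ s in l, ContinuousOn (fs s) (Icc 0 1))
    (hzsmall : ∀ η ∈ Icc (0:ℝ) 1, Tendsto (fun s => fs s η - g η) l (𝓝 0))
    (x ξ : ℝ) :
    Tendsto (fun s => ∫ η in x..ξ, cfun a aT (fs s) g η) l
      (𝓝 (∫ η in x..ξ, Fa a aT (pr η) (g (pr η)))) := by
  have hK0 : (0:ℝ) ≤ Ca / Λ₀ ^ 2 := div_nonneg hCa (by positivity)
  apply intervalIntegral.tendsto_integral_filter_of_dominated_convergence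
    (bound := fun _ => Ca / Λ₀ ^ 2)
  · exact hmeas.mono fun s hs => (cfun_cont hFc hs hgc).aestronglyMeasurable
  · exact Eventually.of_forall fun s => ae_of_all _ fun η _ => by
      simpa [Real.norm_eq_abs] using cfun_bound hK hK0 η
  · exact intervalIntegrable_const
  · refine ae_of_all _ fun η _ => ?_
    have h0 : Tendsto (fun s => fs s (pr η) - g (pr η)) l (𝓝 0) := hzsmall _ (pr_mem η)
    have main : Tendsto (fun s => ∫ σ in (0:ℝ)..1,
        Fa a aT (pr η) (g (pr η) + (fs s (pr η) - g (pr η)) * σ)) l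
        (𝓝 (∫ σ in (0:ℝ)..1, Fa a aT (pr η) (g (pr η) + 0 * σ))) := by
      apply intervalIntegral.tendsto_integral_filter_of_dominated_convergence
        (bound := fun _ => Ca / Λ₀ ^ 2)
      · refine Eventually.of_forall fun s => Continuous.aestronglyMeasurable ?_
        exact cont_comp hFc continuous_const (fun _ => pr_mem η)
          (continuous_const.add (continuous_const.mul continuous_id))
      · exact Eventually.of_forall fun s => ae_of_all _ fun σ _ => by
          simpa [Real.norm_eq_abs] using hK _ (pr_mem η) _
      · exact intervalIntegrable_const
      · refine ae_of_all _ fun σ _ => ?_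
        have hcont2 : Continuous fun u : ℝ => Fa a aT (pr η) (g (pr η) + u * σ) :=
          cont_comp hFc continuous_const (fun _ => pr_mem η)
            (continuous_const.add (continuous_id.mul continuous_const))
        exact (hcont2.tendsto 0).comp h0
    simpa [cfun, zero_mul, add_zero, intervalIntegral.integral_const] using main

end Stmt13

open Stmt13 Set MeasureTheory Filter Topology

/- STATEMENT 13: derivative formulas (in `t` and in `x`) for the characteristic
curve `ω(ξ,x,t)` solving `∂_ξ ω = 1/a(ξ,ω)`, `ω(x,x,t) = t`. -/
theorem stmt_13 (Λ₀ : ℝ) (hΛ₀ : 0 < Λ₀)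
    (a ax aT : ℝ → ℝ → ℝ) (Ca : ℝ)
    (ha_diff : ∀ x ∈ Set.Icc (0:ℝ) 1, ∀ t : ℝ,
      HasDerivWithinAt (fun y => a y t) (ax x t) (Set.Icc 0 1) x ∧
      HasDerivAt (fun τ => a x τ) (aT x t) t)
    (ha_cont : ContinuousOn (fun q : ℝ × ℝ => a q.1 q.2) (Set.Icc 0 1 ×ˢ Set.univ))
    (hax_cont : ContinuousOn (fun q : ℝ × ℝ => ax q.1 q.2) (Set.Icc 0 1 ×ˢ Set.univ))
    (haT_cont : ContinuousOn (fun q : ℝ × ℝ => aT q.1 q.2) (Set.Icc 0 1 ×ˢ Set.univ))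
    (hbdd : ∀ x ∈ Set.Icc (0:ℝ) 1, ∀ t : ℝ, |a x t| + |ax x t| + |aT x t| ≤ Ca)
    (ha_low : ∀ x ∈ Set.Icc (0:ℝ) 1, ∀ t : ℝ, Λ₀ ≤ |a x t|)
    (ω : ℝ → ℝ → ℝ → ℝ)
    (hω : ∀ ξ ∈ Set.Icc (0:ℝ) 1, ∀ x ∈ Set.Icc (0:ℝ) 1, ∀ t : ℝ,
      HasDerivWithinAt (fun ζ => ω ζ x t) (1 / a ξ (ω ξ x t)) (Set.Icc 0 1) ξ)
    (hinit : ∀ x ∈ Set.Icc (0:ℝ) 1, ∀ t : ℝ, ω x x t = t) :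
    ∀ ξ ∈ Set.Icc (0:ℝ) 1, ∀ x ∈ Set.Icc (0:ℝ) 1, ∀ t : ℝ,
      HasDerivAt (fun τ => ω ξ x τ)
        (Real.exp (∫ η in ξ..x, aT η (ω η x t) / (a η (ω η x t)) ^ 2)) t ∧
      HasDerivWithinAt (fun y => ω ξ y t)
        (-(1 / a x t) * Real.exp (∫ η in ξ..x, aT η (ω η x t) / (a η (ω η x t)) ^ 2))
        (Set.Icc 0 1) x := by
  intro ξ hξ x hx t
  have haT : ∀ z ∈ Set.Icc (0:ℝ) 1, ∀ τ : ℝ, HasDerivAt (fun τ' => a z τ') (aT z τ) τ :=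
    fun z hz τ => (ha_diff z hz τ).2
  have hane : ∀ z ∈ Set.Icc (0:ℝ) 1, ∀ τ : ℝ, a z τ ≠ 0 := by
    intro z hz τ h
    have := ha_low z hz τ
    rw [h, abs_zero] at this; linarith
  have hCa : 0 ≤ Ca := by
    have := hbdd 0 (Set.mem_Icc.2 ⟨le_refl 0, zero_le_one⟩) 0
    have h1 := abs_nonneg (a 0 0); have h2 := abs_nonneg (ax 0 0)
    have h3 := abs_nonneg (aT 0 0); linarith
  have hFc : ContinuousOn (fun q : ℝ × ℝ => Fa a aT q.1 q.2) (Set.Icc 0 1 ×ˢ Set.univ) := by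
    apply ContinuousOn.div haT_cont.neg (ha_cont.pow 2)
    exact fun q hq => pow_ne_zero 2 (hane q.1 hq.1 q.2)
  have hK : ∀ z ∈ Icc (0:ℝ) 1, ∀ τ : ℝ, |Fa a aT z τ| ≤ Ca / Λ₀ ^ 2 :=
    fun z hz τ => Fa_bound hΛ₀ ha_low hbdd hz τ
  set g : ℝ → ℝ := fun ζ => ω ζ x t with hg
  have hgode : ∀ ζ ∈ Icc (0:ℝ) 1, HasDerivWithinAt g (1 / a ζ (g ζ)) (Icc 0 1) ζ :=
    fun ζ hζ => hω ζ hζ x hx t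
  have hgc : ContinuousOn g (Icc 0 1) := fun ζ hζ => (hgode ζ hζ).continuousWithinAt
  have hLrw : (∫ η in ξ..x, aT η (ω η x t) / a η (ω η x t) ^ 2)
      = ∫ η in x..ξ, Fa a aT (pr η) (g (pr η)) := by
    rw [intervalIntegral.integral_symm, ← intervalIntegral.integral_neg]
    apply intervalIntegral.integral_congr
    intro η hη
    have hmem : η ∈ Icc (0:ℝ) 1 := uIcc_subset_Icc hx hξ hη
    simp [Fa, pr_eq hmem, neg_div, hg]
  rw [hLrw, one_div]
  constructor
  · -- derivative in t
    rw [hasDerivAt_iff_tendsto_slope]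
    have hT2 : Tendsto (fun s => ∫ η in x..ξ, cfun a aT (fun ζ => ω ζ x s) g η) (𝓝[≠] t)
        (𝓝 (∫ η in x..ξ, Fa a aT (pr η) (g (pr η)))) := by
      apply tendsto_cfun hΛ₀ hCa hFc hK hgc
      · exact Eventually.of_forall fun s ζ hζ => (hω ζ hζ x hx s).continuousWithinAt
      · intro η hη
        have hb : ∀ s : ℝ, |ω η x s - g η| ≤ |s - t| * Real.exp (Ca / Λ₀ ^ 2) := by
          intro s
          have hh := key_bound hΛ₀ hCa ha_cont haT_cont ha_low haT hK
            (f := fun ζ => ω ζ x s) (g := g)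
            (fun ζ hζ => hω ζ hζ x hx s) hgode hx hη
          simpa [hg, hinit x hx s, hinit x hx t] using hh
        apply squeeze_zero_norm (fun s => by simpa [Real.norm_eq_abs] using hb s)
        have hc0 : Tendsto (fun s : ℝ => |s - t| * Real.exp (Ca / Λ₀ ^ 2)) (𝓝 t)
            (𝓝 (|t - t| * Real.exp (Ca / Λ₀ ^ 2))) :=
          (((continuous_id.sub continuous_const).abs).mul continuous_const).tendsto t
        simp only [sub_self, abs_zero, zero_mul] at hc0
        exact hc0.mono_left nhdsWithin_le_nhds
    have hTE := (Real.continuous_exp.tendsto _).comp hT2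
    apply Tendsto.congr' ?_ hTE
    filter_upwards [self_mem_nhdsWithin] with s hs
    have hsne : s ≠ t := hs
    have hform := key hΛ₀ ha_cont haT_cont ha_low haT
      (f := fun ζ => ω ζ x s) (g := g) (fun ζ hζ => hω ζ hζ x hx s) hgode hx hξ
    have hzz : ω ξ x s - ω ξ x t = (s - t) *
        Real.exp (∫ η in x..ξ, cfun a aT (fun ζ => ω ζ x s) g η) := by
      simpa [hg, hinit x hx s, hinit x hx t] using hform
    show Real.exp _ = slope (fun τ => ω ξ x τ) t s
    rw [slope_def_field, hzz, mul_div_cancel_left₀ _ (sub_ne_zero.2 hsne)]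
  · -- derivative in x
    rw [hasDerivWithinAt_iff_tendsto_slope]
    have hmem' : ∀ᶠ y in 𝓝[Icc (0:ℝ) 1 \ {x}] x, y ∈ Icc (0:ℝ) 1 \ {x} :=
      self_mem_nhdsWithin
    have hlip : ∀ y ∈ Icc (0:ℝ) 1, ∀ ζ ∈ Icc (0:ℝ) 1,
        |ω ζ y t - t| ≤ Λ₀⁻¹ * |ζ - y| := by
      intro y hy ζ hζ
      have hb : ∀ ζ' ∈ Icc (0:ℝ) 1, ‖1 / a ζ' (ω ζ' y t)‖ ≤ Λ₀⁻¹ := by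
        intro ζ' hζ'
        rw [Real.norm_eq_abs, abs_div, abs_one]
        calc 1 / |a ζ' (ω ζ' y t)| ≤ 1 / Λ₀ :=
              one_div_le_one_div_of_le hΛ₀ (ha_low ζ' hζ' _)
          _ = Λ₀⁻¹ := one_div _
      have hh := Convex.norm_image_sub_le_of_norm_hasDerivWithin_le
        (f' := fun ζ' => 1 / a ζ' (ω ζ' y t)) (fun ζ' hζ' => hω ζ' hζ' y hy t)
        hb (convex_Icc 0 1) hy hζ
      simpa [Real.norm_eq_abs, hinit y hy t] using hh
    have hci : ∀ y ∈ Icc (0:ℝ) 1,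
        ContinuousOn (fun ζ => 1 / a ζ (ω ζ y t)) (uIcc y x) := by
      intro y hy
      have hsub : uIcc y x ⊆ Icc (0:ℝ) 1 := uIcc_subset_Icc hy hx
      have hcurveI : ContinuousOn (fun ζ => ω ζ y t) (Icc 0 1) :=
        fun ζ hζ => (hω ζ hζ y hy t).continuousWithinAt
      have hcurve : ContinuousOn (fun ζ => ω ζ y t) (uIcc y x) := hcurveI.mono hsub
      apply ContinuousOn.div continuousOn_const
      · exact contOn_comp ha_cont continuousOn_id (fun ζ hζ => hsub hζ) hcurve
      · exact fun ζ hζ => hane ζ (hsub hζ) _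
    have hFTC : ∀ y ∈ Icc (0:ℝ) 1, ω x y t - t = ∫ ζ in y..x, 1 / a ζ (ω ζ y t) := by
      intro y hy
      have hsub : uIcc y x ⊆ Icc (0:ℝ) 1 := uIcc_subset_Icc hy hx
      have hcurveI : ContinuousOn (fun ζ => ω ζ y t) (Icc 0 1) :=
        fun ζ hζ => (hω ζ hζ y hy t).continuousWithinAt
      have hcurve : ContinuousOn (fun ζ => ω ζ y t) (uIcc y x) := hcurveI.mono hsub
      have hder : ∀ ζ ∈ Ioo (min y x) (max y x),
          HasDerivWithinAt (fun ζ' => ω ζ' y t) (1 / a ζ (ω ζ y t)) (Ioi ζ) ζ := by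
        intro ζ hζ
        have h0 : (0:ℝ) < ζ := lt_of_le_of_lt (le_min hy.1 hx.1) hζ.1
        have h1 : ζ < 1 := lt_of_lt_of_le hζ.2 (max_le hy.2 hx.2)
        exact ((hω ζ ⟨h0.le, h1.le⟩ y hy t).hasDerivAt (Icc_mem_nhds h0 h1)).hasDerivWithinAt
      have hres := intervalIntegral.integral_eq_sub_of_hasDeriv_right hcurve hder
        ((hci y hy).intervalIntegrable)
      rw [hres, hinit y hy t]
    have T1 : Tendsto (fun y => (ω x y t - t) / (y - x)) (𝓝[Icc (0:ℝ) 1 \ {x}] x)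
        (𝓝 (-(a x t)⁻¹)) := by
      rw [Metric.tendsto_nhdsWithin_nhds]
      intro ε hε
      have hcw : ContinuousWithinAt (fun q : ℝ × ℝ => (a q.1 q.2)⁻¹)
          (Icc 0 1 ×ˢ univ) (x, t) :=
        (ha_cont (x, t) ⟨hx, mem_univ t⟩).inv₀ (hane x hx t)
      rw [Metric.continuousWithinAt_iff] at hcw
      obtain ⟨δ₁, hδ₁pos, hδ₁⟩ := hcw (ε / 2) (by linarith)
      refine ⟨min δ₁ (Λ₀ * δ₁ / 2), by positivity, ?_⟩
      intro y hy hyd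
      have hyI : y ∈ Icc (0:ℝ) 1 := hy.1
      have hyne : y ≠ x := hy.2
      have hyx : |y - x| < min δ₁ (Λ₀ * δ₁ / 2) := by rwa [Real.dist_eq] at hyd
      have key2 : ∀ ζ ∈ Set.uIoc y x, |1 / a ζ (ω ζ y t) - (a x t)⁻¹| ≤ ε / 2 := by
        intro ζ hζ
        have hζu : ζ ∈ uIcc y x := uIoc_subset_uIcc hζ
        have hζI : ζ ∈ Icc (0:ℝ) 1 := uIcc_subset_Icc hyI hx hζu
        have hζx : |ζ - x| ≤ |y - x| := by
          rcases le_total y x with h | h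
          · rw [Set.uIcc_of_le h, Set.mem_Icc] at hζu
            rw [abs_of_nonpos (by linarith : y - x ≤ 0)]
            rw [abs_sub_le_iff]; constructor <;> linarith
          · rw [Set.uIcc_of_ge h, Set.mem_Icc] at hζu
            rw [abs_of_nonneg (by linarith : (0:ℝ) ≤ y - x)]
            rw [abs_sub_le_iff]; constructor <;> linarith
        have hd2 : dist (ζ, ω ζ y t) (x, t) < δ₁ := by
          rw [Prod.dist_eq]
          apply max_lt
          · rw [Real.dist_eq]
            exact lt_of_le_of_lt hζx (lt_of_lt_of_le hyx (min_le_left _ _))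
          · rw [Real.dist_eq]
            have h1 := hlip y hyI ζ hζI
            have h2 : |ζ - y| ≤ 2 * |y - x| := by
              have h3 : |ζ - y| ≤ |ζ - x| + |x - y| := abs_sub_le ζ x y
              rw [abs_sub_comm x y] at h3; linarith
            have h3 : |y - x| < Λ₀ * δ₁ / 2 := lt_of_lt_of_le hyx (min_le_right _ _)
            have hΛinv : (0:ℝ) < Λ₀⁻¹ := by positivity
            calc |ω ζ y t - t| ≤ Λ₀⁻¹ * |ζ - y| := h1
              _ ≤ Λ₀⁻¹ * (2 * |y - x|) := by
                  apply mul_le_mul_of_nonneg_left h2 hΛinv.le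
              _ < Λ₀⁻¹ * (2 * (Λ₀ * δ₁ / 2)) := by
                  apply mul_lt_mul_of_pos_left _ hΛinv
                  linarith
              _ = δ₁ := by field_simp
        have h4 := hδ₁ ⟨hζI, mem_univ _⟩ hd2
        rw [Real.dist_eq] at h4
        rw [one_div]
        linarith [h4]
      have hyne' : y - x ≠ 0 := sub_ne_zero.2 hyne
      have hN : (∫ ζ in y..x, (1 / a ζ (ω ζ y t) - (a x t)⁻¹))
          = (ω x y t - t) - (x - y) * (a x t)⁻¹ := by
        rw [intervalIntegral.integral_sub ((hci y hyI).intervalIntegrable)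
          intervalIntegrable_const, ← hFTC y hyI, intervalIntegral.integral_const,
          smul_eq_mul]
      have hNb : |∫ ζ in y..x, (1 / a ζ (ω ζ y t) - (a x t)⁻¹)| ≤ ε / 2 * |x - y| := by
        have := intervalIntegral.norm_integral_le_of_norm_le_const
          (C := ε / 2) (a := y) (b := x)
          (f := fun ζ => 1 / a ζ (ω ζ y t) - (a x t)⁻¹)
          (fun ζ hζ => by rw [Real.norm_eq_abs]; exact key2 ζ hζ)
        simpa [Real.norm_eq_abs] using this
      rw [Real.dist_eq]
      have heq : (ω x y t - t) / (y - x) - -(a x t)⁻¹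
          = (∫ ζ in y..x, (1 / a ζ (ω ζ y t) - (a x t)⁻¹)) / (y - x) := by
        rw [hN]; field_simp; ring
      rw [heq, abs_div]
      rw [abs_sub_comm x y] at hNb
      have habs : (0:ℝ) < |y - x| := abs_pos.2 hyne'
      calc |∫ ζ in y..x, (1 / a ζ (ω ζ y t) - (a x t)⁻¹)| / |y - x|
          ≤ (ε / 2 * |y - x|) / |y - x| := by gcongr
        _ = ε / 2 := by field_simp
        _ < ε := by linarith
    have hT2 : Tendsto (fun y => ∫ η in x..ξ, cfun a aT (fun ζ => ω ζ y t) g η)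
        (𝓝[Icc (0:ℝ) 1 \ {x}] x) (𝓝 (∫ η in x..ξ, Fa a aT (pr η) (g (pr η)))) := by
      apply tendsto_cfun hΛ₀ hCa hFc hK hgc
      · exact hmem'.mono fun y hy ζ hζ => (hω ζ hζ y hy.1 t).continuousWithinAt
      · intro η hη
        apply squeeze_zero_norm'
          (a := fun y => Λ₀⁻¹ * |x - y| * Real.exp (Ca / Λ₀ ^ 2))
        · filter_upwards [hmem'] with y hy
          have hb := key_bound hΛ₀ hCa ha_cont haT_cont ha_low haT hK
            (f := fun ζ => ω ζ y t) (g := g) (fun ζ hζ => hω ζ hζ y hy.1 t) hgode hx hη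
          have hgx : g x = t := hinit x hx t
          have h2 : |ω x y t - g x| ≤ Λ₀⁻¹ * |x - y| := by
            rw [hgx]; exact hlip y hy.1 x hx
          calc ‖ω η y t - g η‖ = |ω η y t - g η| := Real.norm_eq_abs _
            _ ≤ |ω x y t - g x| * Real.exp (Ca / Λ₀ ^ 2) := hb
            _ ≤ Λ₀⁻¹ * |x - y| * Real.exp (Ca / Λ₀ ^ 2) := by
                apply mul_le_mul_of_nonneg_right h2 (Real.exp_pos _).le
        · have hc0 : Tendsto (fun y : ℝ => Λ₀⁻¹ * |x - y| * Real.exp (Ca / Λ₀ ^ 2))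
              (𝓝 x) (𝓝 (Λ₀⁻¹ * |x - x| * Real.exp (Ca / Λ₀ ^ 2))) :=
            ((continuous_const.mul (continuous_const.sub continuous_id).abs).mul
              continuous_const).tendsto x
          simp only [sub_self, abs_zero, mul_zero, zero_mul] at hc0
          exact hc0.mono_left nhdsWithin_le_nhds
    have hTE := (Real.continuous_exp.tendsto _).comp hT2
    apply Tendsto.congr' ?_ (T1.mul hTE)
    filter_upwards [hmem'] with y hy
    have hform := key hΛ₀ ha_cont haT_cont ha_low haT
      (f := fun ζ => ω ζ y t) (g := g) (fun ζ hζ => hω ζ hζ y hy.1 t) hgode hx hξ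
    have hzz : ω ξ y t - ω ξ x t = (ω x y t - t) *
        Real.exp (∫ η in x..ξ, cfun a aT (fun ζ => ω ζ y t) g η) := by
      simpa [hg, hinit x hx t] using hform
    show _ = slope (fun y' => ω ξ y' t) x y
    rw [slope_def_field, hzz, mul_div_right_comm]
    rfl
end

section
/- For all real numbers λ and μ, every continuously differentiable pair (v₁, v₂) : [0,1] → ℂ² satisfying v₁′(x) = (λ − μ)v₁(x) − v₂(x) and v₂′(x) = μ v₂(x) for all x ∈ [0,1], together with the boundary conditions v₁(0) = 0 and v₁(1) = v₂(1), is identically zero. In other words, the eigenvalue problem has no real eigenvalues. -/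
open Set Complex

private lemma exp_deriv14 (b : ℂ) (x : ℝ) :
    HasDerivAt (fun x : ℝ => Complex.exp (b * x)) (b * Complex.exp (b * x)) x := by
  have h1 : HasDerivAt (fun x : ℝ => b * (x : ℂ)) b x := by
    simpa using (Complex.ofRealCLM.hasDerivAt (x := x)).const_mul b
  simpa [mul_comm] using h1.cexp

private lemma const_aux14 (f : ℝ → ℂ)
    (hf : ∀ x ∈ Set.Icc (0:ℝ) 1, HasDerivWithinAt f 0 (Set.Icc 0 1) x) :
    ∀ x ∈ Set.Icc (0:ℝ) 1, f x = f 0 :=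
  constant_of_has_deriv_right_zero (fun x hx => (hf x hx).continuousWithinAt)
    (fun x hx => (hf x (Ico_subset_Icc_self hx)).mono_of_mem_nhdsWithin
      (Icc_mem_nhdsGE_of_mem hx))

private lemma real_ne14 (t : ℝ) (ht : t ≠ 0) : (t + 1) * Real.exp t ≠ 1 := by
  rcases lt_or_gt_of_ne ht with h | h
  · have h1 : -t + 1 < Real.exp (-t) := Real.add_one_lt_exp (neg_ne_zero.mpr ht)
    have h3 : (0:ℝ) < Real.exp t := Real.exp_pos t
    have h4 : (1 - t) * Real.exp t < Real.exp (-t) * Real.exp t :=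
      mul_lt_mul_of_pos_right (by linarith) h3
    have h5 : Real.exp (-t) * Real.exp t = 1 := by
      rw [← Real.exp_add]; norm_num
    intro hiff
    nlinarith [mul_pos (show (0:ℝ) < -t by linarith) h3]
  · have h1 : t + 1 < Real.exp t := Real.add_one_lt_exp ht
    have h3 : (0:ℝ) < Real.exp t := Real.exp_pos t
    nlinarith

theorem stmt_14 (lam mu : ℝ) (v₁ v₂ : ℝ → ℂ)
    (hv₁ : ∀ x ∈ Set.Icc (0:ℝ) 1,
      HasDerivWithinAt v₁ (((lam : ℂ) - (mu : ℂ)) * v₁ x - v₂ x) (Set.Icc 0 1) x)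
    (hv₂ : ∀ x ∈ Set.Icc (0:ℝ) 1,
      HasDerivWithinAt v₂ ((mu : ℂ) * v₂ x) (Set.Icc 0 1) x)
    (h0 : v₁ 0 = 0) (h1 : v₁ 1 = v₂ 1) :
    ∀ x ∈ Set.Icc (0:ℝ) 1, v₁ x = 0 ∧ v₂ x = 0 := by
  set a : ℂ := (lam : ℂ) - mu with ha
  set t : ℝ := 2 * mu - lam with htdef
  set c : ℂ := v₂ 0 with hc
  -- Step 1: v₂ x = c * exp(mu * x)
  have hw : ∀ x ∈ Set.Icc (0:ℝ) 1, Complex.exp (-(mu:ℂ) * x) * v₂ x = c := by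
    have := const_aux14 (fun x => Complex.exp (-(mu:ℂ) * x) * v₂ x) ?_
    · intro x hx
      have h := this x hx
      simpa using h
    · intro x hx
      have hd := ((exp_deriv14 (-(mu:ℂ)) x).hasDerivWithinAt.mul (hv₂ x hx))
      refine hd.congr_deriv ?_
      ring
  have hv₂x : ∀ x ∈ Set.Icc (0:ℝ) 1, v₂ x = c * Complex.exp ((mu:ℂ) * x) := by
    intro x hx
    have h := hw x hx
    have hone : Complex.exp (-(mu:ℂ) * x) * Complex.exp ((mu:ℂ) * x) = 1 := by
      rw [← Complex.exp_add]; norm_num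
    calc v₂ x = (Complex.exp (-(mu:ℂ) * x) * Complex.exp ((mu:ℂ) * x)) * v₂ x := by
          rw [hone, one_mul]
      _ = c * Complex.exp ((mu:ℂ) * x) := by rw [← h]; ring
  -- Step 2: choose E
  obtain ⟨E, hE0, hEd, hEne⟩ : ∃ E : ℝ → ℂ, E 0 = 0 ∧
      (∀ x : ℝ, HasDerivAt E (Complex.exp ((t:ℂ) * x)) x) ∧
      Complex.exp (t:ℂ) + E 1 ≠ 0 := by
    rcases eq_or_ne t 0 with ht | ht
    · refine ⟨fun x => (x : ℂ), by simp, ?_, ?_⟩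
      · intro x
        simpa [ht] using (hasDerivAt_id x).ofReal_comp
      · norm_num [ht]
    · refine ⟨fun x => (Complex.exp ((t:ℂ) * x) - 1) / t, by simp, ?_, ?_⟩
      · intro x
        have htC : (t : ℂ) ≠ 0 := by exact_mod_cast ht
        have := ((exp_deriv14 (t:ℂ) x).sub_const 1).div_const (t:ℂ)
        refine this.congr_deriv ?_
        field_simp
      · have htC : (t : ℂ) ≠ 0 := by exact_mod_cast ht
        intro hcontra
        have h2 : (t:ℂ) * Complex.exp (t:ℂ) + (Complex.exp (t:ℂ) - 1) = 0 := by
          field_simp at hcontra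
          rw [Complex.ofReal_one, mul_one] at hcontra
          linear_combination hcontra
        rw [show Complex.exp (t:ℂ) = ((Real.exp t : ℝ) : ℂ) by
          rw [← Complex.ofReal_exp]] at h2
        have h3 : t * Real.exp t + (Real.exp t - 1) = 0 := by exact_mod_cast h2
        exact real_ne14 t ht (by linarith)
  -- Step 3: constancy of exp(-a x) v₁ x + c E x
  have hkey : ∀ x ∈ Set.Icc (0:ℝ) 1,
      Complex.exp (-a * x) * v₁ x + c * E x = 0 := by
    have hcon := const_aux14 (fun x => Complex.exp (-a * x) * v₁ x + c * E x) ?_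
    · intro x hx
      have h := hcon x hx
      simpa [h0, hE0] using h
    · intro x hx
      have hd1 := (exp_deriv14 (-a) x).hasDerivWithinAt.mul (hv₁ x hx)
      have hd2 := ((hEd x).const_mul c).hasDerivWithinAt (s := Set.Icc 0 1)
      have hd := hd1.add hd2
      refine hd.congr_deriv (Eq.symm ?_)
      have hexp : Complex.exp (-a * x) * Complex.exp ((mu:ℂ) * x)
          = Complex.exp ((t:ℂ) * x) := by
        rw [← Complex.exp_add]
        congr 1
        rw [ha, htdef]
        push_cast
        ring
      rw [hv₂x x hx]
      linear_combination c * hexp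
  -- Step 4: c = 0
  have hc0 : c = 0 := by
    have h := hkey 1 (by norm_num)
    rw [h1, hv₂x 1 (by norm_num)] at h
    have hexp : Complex.exp (-a * 1) * Complex.exp ((mu:ℂ) * 1)
        = Complex.exp (t:ℂ) := by
      rw [← Complex.exp_add]
      congr 1
      rw [ha, htdef]
      push_cast
      ring
    have h' : c * (Complex.exp (t:ℂ) + E 1) = 0 := by
      linear_combination h - c * hexp
    rcases mul_eq_zero.mp h' with h'' | h''
    · exact h''
    · exact absurd h'' hEne
  -- conclude
  intro x hx
  have hv2 : v₂ x = 0 := by rw [hv₂x x hx, hc0, zero_mul]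
  have h := hkey x hx
  rw [hc0, zero_mul, add_zero] at h
  have : v₁ x = 0 := by
    rcases mul_eq_zero.mp h with h'' | h''
    · exact absurd h'' (Complex.exp_ne_zero _)
    · exact h''
  exact ⟨this, hv2⟩
end

section
/- For every ξ > 0 one has e^{2ξ} > (1 − ξ)², and the set of ξ > 0 satisfying the characteristic equation sin √(e^{2ξ} − (1 − ξ)²) = −√(1 − e^{−2ξ}(1 − ξ)²) is infinite and unbounded above; equivalently, there exists a strictly increasing sequence 0 < ξ₀ < ξ₁ < ξ₂ < ⋯ of solutions tending to +∞. -/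
open Real Filter Set

noncomputable def gfun (ξ : ℝ) : ℝ := Real.sqrt (Real.exp (2 * ξ) - (1 - ξ) ^ 2)

noncomputable def hfun (ξ : ℝ) : ℝ :=
  Real.sin (gfun ξ) + Real.sqrt (1 - Real.exp (-(2 * ξ)) * (1 - ξ) ^ 2)

lemma exp_two_mul' (ξ : ℝ) : Real.exp (2 * ξ) = Real.exp ξ * Real.exp ξ := by
  rw [two_mul, Real.exp_add]

lemma part1 : ∀ ξ : ℝ, 0 < ξ → (1 - ξ) ^ 2 < Real.exp (2 * ξ) := by
  intro ξ hξ
  rw [exp_two_mul']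
  have hE := Real.add_one_lt_exp (ne_of_gt hξ)
  have h1 : 0 < Real.exp ξ - (1 - ξ) := by linarith
  have h2 : 0 < Real.exp ξ + (1 - ξ) := by linarith
  nlinarith [mul_pos h1 h2]

lemma cont_g : Continuous gfun := by
  unfold gfun; fun_prop

lemma cont_h : Continuous hfun := by
  unfold hfun gfun; fun_prop

lemma tendsto_inner : Tendsto (fun ξ : ℝ => Real.exp (2 * ξ) - (1 - ξ) ^ 2) atTop atTop := by
  refine tendsto_atTop_mono' atTop ?_ Real.tendsto_exp_atTop
  filter_upwards [eventually_ge_atTop (1 : ℝ)] with ξ hξ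
  rw [exp_two_mul']
  have hE := Real.add_one_le_exp ξ
  nlinarith [sq_nonneg (Real.exp ξ - (ξ + 1))]

lemma tendsto_sqrt' : Tendsto Real.sqrt atTop atTop := by
  refine tendsto_atTop_atTop.2 fun b => ⟨b ^ 2, fun a ha => ?_⟩
  calc b ≤ |b| := le_abs_self b
    _ = Real.sqrt (b ^ 2) := (Real.sqrt_sq_eq_abs b).symm
    _ ≤ Real.sqrt a := Real.sqrt_le_sqrt ha

lemma tendsto_g : Tendsto gfun atTop atTop := tendsto_sqrt'.comp tendsto_inner

lemma key (M : ℝ) : ∃ ξ : ℝ, M < ξ ∧ 0 < ξ ∧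
    Real.sin (Real.sqrt (Real.exp (2 * ξ) - (1 - ξ) ^ 2)) =
      -Real.sqrt (1 - Real.exp (-(2 * ξ)) * (1 - ξ) ^ 2) := by
  set a : ℝ := max M 1 + 1 with ha
  have haM : M < a := by have := le_max_left M 1; simp only [ha]; linarith
  have ha1 : 1 < a := by have := le_max_right M 1; simp only [ha]; linarith
  obtain ⟨b, hab, hgb⟩ : ∃ b, a ≤ b ∧ gfun a + 4 * π ≤ gfun b := by
    obtain ⟨b, h1, h2⟩ :=
      ((tendsto_g.eventually_ge_atTop (gfun a + 4 * π)).and (eventually_ge_atTop a)).exists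
    exact ⟨b, h2, h1⟩
  set c := gfun a with hc
  set k : ℤ := ⌈(c - π / 2) / (2 * π)⌉ with hk
  have hπ : (0 : ℝ) < 2 * π := by positivity
  have hk1 : c - π / 2 ≤ k * (2 * π) := by
    rw [← div_le_iff₀ hπ]; exact Int.le_ceil _
  have hk2 : (k : ℝ) * (2 * π) < c - π / 2 + 2 * π := by
    have h := Int.ceil_lt_add_one ((c - π / 2) / (2 * π))
    have h2 := mul_lt_mul_of_pos_right h hπ
    rw [add_mul, div_mul_cancel₀ _ (ne_of_gt hπ), one_mul] at h2
    exact h2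
  set t1 : ℝ := π / 2 + (k : ℝ) * (2 * π) with ht1def
  have hct1 : c ≤ t1 := by simp only [ht1def]; linarith
  have ht1b : t1 + π ≤ gfun b := by
    have hπ0 := Real.pi_pos
    simp only [ht1def]; linarith
  have hπ0 := Real.pi_pos
  obtain ⟨x, hx, hgx⟩ := intermediate_value_Icc hab cont_g.continuousOn
    (show t1 ∈ Icc (gfun a) (gfun b) from ⟨hct1, by linarith⟩)
  obtain ⟨y, hy, hgy⟩ := intermediate_value_Icc hab cont_g.continuousOn
    (show t1 + π ∈ Icc (gfun a) (gfun b) from ⟨by linarith, ht1b⟩)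
  have hsx : Real.sin (gfun x) = 1 := by
    rw [hgx, ht1def, Real.sin_add_int_mul_two_pi, Real.sin_pi_div_two]
  have hsy : Real.sin (gfun y) = -1 := by
    rw [hgy, Real.sin_add_pi, ht1def, Real.sin_add_int_mul_two_pi, Real.sin_pi_div_two]
  have hhx : 0 < hfun x := by
    have := Real.sqrt_nonneg (1 - Real.exp (-(2 * x)) * (1 - x) ^ 2)
    unfold hfun; rw [hsx]; linarith
  have hy1 : 1 < y := lt_of_lt_of_le ha1 hy.1
  have hhy : hfun y < 0 := by
    have hpos : 0 < Real.exp (-(2 * y)) * (1 - y) ^ 2 := by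
      have h2 : 0 < (1 - y) ^ 2 := by nlinarith
      exact mul_pos (Real.exp_pos _) h2
    have hs : Real.sqrt (1 - Real.exp (-(2 * y)) * (1 - y) ^ 2) < 1 := by
      rw [Real.sqrt_lt' one_pos]; nlinarith
    unfold hfun; rw [hsy]; linarith
  have hMx : M < x := lt_of_lt_of_le haM hx.1
  have hMy : M < y := lt_of_lt_of_le haM hy.1
  have h0x : (0 : ℝ) < x := by linarith [hx.1]
  have h0y : (0 : ℝ) < y := by linarith
  rcases le_total x y with hxy | hxy
  · obtain ⟨ξ, hξmem, hξ⟩ := intermediate_value_Icc' hxy cont_h.continuousOn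
      (show (0 : ℝ) ∈ Icc (hfun y) (hfun x) from ⟨le_of_lt hhy, le_of_lt hhx⟩)
    refine ⟨ξ, lt_of_lt_of_le hMx hξmem.1, lt_of_lt_of_le h0x hξmem.1, ?_⟩
    unfold hfun gfun at hξ; linarith
  · obtain ⟨ξ, hξmem, hξ⟩ := intermediate_value_Icc hxy cont_h.continuousOn
      (show (0 : ℝ) ∈ Icc (hfun y) (hfun x) from ⟨le_of_lt hhy, le_of_lt hhx⟩)
    refine ⟨ξ, lt_of_lt_of_le hMy hξmem.1, lt_of_lt_of_le h0y hξmem.1, ?_⟩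
    unfold hfun gfun at hξ; linarith

noncomputable def seqsol : ℕ → ℝ
  | 0 => (key 0).choose
  | n + 1 => (key (max (seqsol n) (n + 1))).choose

lemma seqsol_succ_gt (n : ℕ) : max (seqsol n) (n + 1 : ℝ) < seqsol (n + 1) :=
  (key (max (seqsol n) (n + 1))).choose_spec.1

lemma seqsol_spec (k : ℕ) : 0 < seqsol k ∧
    Real.sin (Real.sqrt (Real.exp (2 * seqsol k) - (1 - seqsol k) ^ 2)) =
      -Real.sqrt (1 - Real.exp (-(2 * seqsol k)) * (1 - seqsol k) ^ 2) := by
  cases k with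
  | zero => exact ⟨(key 0).choose_spec.2.1, (key 0).choose_spec.2.2⟩
  | succ n => exact ⟨(key _).choose_spec.2.1, (key _).choose_spec.2.2⟩

theorem stmt_17 :
    (∀ ξ : ℝ, 0 < ξ → (1 - ξ) ^ 2 < Real.exp (2 * ξ)) ∧
    ∃ f : ℕ → ℝ, StrictMono f ∧
      (∀ k : ℕ, 0 < f k ∧
        Real.sin (Real.sqrt (Real.exp (2 * f k) - (1 - f k) ^ 2)) =
          -Real.sqrt (1 - Real.exp (-(2 * f k)) * (1 - f k) ^ 2)) ∧
      Filter.Tendsto f Filter.atTop Filter.atTop := by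
  refine ⟨part1, seqsol, ?_, seqsol_spec, ?_⟩
  · refine strictMono_nat_of_lt_succ fun n => ?_
    exact lt_of_le_of_lt (le_max_left _ _) (seqsol_succ_gt n)
  · have hge : ∀ n : ℕ, (n : ℝ) ≤ seqsol n := by
      intro n
      cases n with
      | zero => exact_mod_cast le_of_lt (seqsol_spec 0).1
      | succ m =>
        have := seqsol_succ_gt m
        have h2 : ((m : ℝ) + 1) ≤ max (seqsol m) ((m : ℝ) + 1) := le_max_right _ _
        push_cast
        linarith
    exact tendsto_atTop_mono hge tendsto_natCast_atTop_atTop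
end
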